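/- For every nonzero real τ there exists t ∈ ℝ such that (sin(t+τ) + sin(√2(t+τ))) · (sin t + sin(√2 t)) < 0. -/

import Mathlib

open MeasureTheory Set ENNReal Real
noncomputable section

/-- The Young-type function `φ_{p}(t)`: `t^p` for `p < ∞`, and `0` for `t ≤ 1`, `∞` for `t > 1`
when `p = ∞`. -/
def phiVar (p : ℝ≥0∞) (t : ℝ) : ℝ≥0∞ :=
  if p = ⊤ then (if t ≤ 1 then 0 else ⊤) else ENNReal.ofReal (t ^ p.toReal)

/-- The modular `ρ(g) = ∫_Ω φ_{p(x)}(g(x)) dx` of a nonnegative function `g`. -/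
def rhoVar (p : ℝ → ℝ≥0∞) (Ω : Set ℝ) (g : ℝ → ℝ) : ℝ≥0∞ :=
  ∫⁻ x in Ω, phiVar (p x) (g x)

/-- The Luxemburg norm of `f` on `Ω` with variable exponent `p`. -/
def luxNorm {X : Type*} [NormedAddCommGroup X] (p : ℝ → ℝ≥0∞) (Ω : Set ℝ) (f : ℝ → X) : ℝ :=
  sInf {lam : ℝ | 0 < lam ∧ rhoVar p Ω (fun x => ‖f x‖ / lam) ≤ 1}

/-- Membership in the variable-exponent Lebesgue space `L^{p(x)}(Ω : X)`. -/
def MemLvar {X : Type*} [NormedAddCommGroup X] (p : ℝ → ℝ≥0∞) (Ω : Set ℝ) (f : ℝ → X) : Prop :=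
  AEStronglyMeasurable f (volume.restrict Ω) ∧
    ∃ lam > 0, rhoVar p Ω (fun x => lam * ‖f x‖) < ⊤

/-- Stepanov `p(x)`-boundedness: all translates lie in `L^{p(x)}([0,1]:X)` with uniformly
bounded Luxemburg norms. -/
def StepanovBounded {X : Type*} [NormedAddCommGroup X] (p : ℝ → ℝ≥0∞) (I : Set ℝ)
    (f : ℝ → X) : Prop :=
  (∀ t ∈ I, MemLvar p (Icc 0 1) (fun s => f (t + s))) ∧
    ∃ C : ℝ, ∀ t ∈ I, luxNorm p (Icc 0 1) (fun s => f (t + s)) ≤ C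

/-- The Stepanov `p(x)`-norm `sup_{t ∈ I} ‖f(t+·)‖_{L^{p(x)}[0,1]}`. -/
def stepNorm {X : Type*} [NormedAddCommGroup X] (p : ℝ → ℝ≥0∞) (I : Set ℝ) (f : ℝ → X) : ℝ :=
  sSup ((fun t => luxNorm p (Icc 0 1) (fun s => f (t + s))) '' I)

/-- `S` is relatively dense in `I`: there is `l > 0` such that every subinterval of `I` of
length `l` meets `S`. -/
def RelDenseIn (I S : Set ℝ) : Prop :=
  ∃ l > 0, ∀ a : ℝ, Icc a (a + l) ⊆ I → (S ∩ Icc a (a + l)).Nonempty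

/-- Bohr almost periodicity of `f : I → X`. -/
def AlmostPeriodicOn {X : Type*} [NormedAddCommGroup X] (I : Set ℝ) (f : ℝ → X) : Prop :=
  ContinuousOn f I ∧
    ∀ ε > 0, RelDenseIn I {τ | 0 < τ ∧ ∀ t ∈ I, ‖f (t + τ) - f t‖ ≤ ε}

/-- Stepanov `p(x)`-almost periodicity: the map `t ↦ f(t+·)` into `L^{p(x)}([0,1]:X)` is
well defined, continuous and almost periodic. -/
def StepanovAP {X : Type*} [NormedAddCommGroup X] (p : ℝ → ℝ≥0∞) (I : Set ℝ) (f : ℝ → X) : Prop :=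
  (∀ t ∈ I, MemLvar p (Icc 0 1) (fun s => f (t + s))) ∧
  (∀ t ∈ I, ∀ ε > 0, ∃ δ > 0, ∀ t' ∈ I, |t' - t| < δ →
      luxNorm p (Icc 0 1) (fun s => f (t' + s) - f (t + s)) ≤ ε) ∧
  (∀ ε > 0, RelDenseIn I
      {τ | 0 < τ ∧ ∀ t ∈ I, luxNorm p (Icc 0 1) (fun s => f (t + τ + s) - f (t + s)) ≤ ε})

open Real Filter Set

private lemma irr_lin (a b : ℤ) (h : (a : ℝ) + b * Real.sqrt 2 = 0) : a = 0 ∧ b = 0 := by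
  by_cases hb : b = 0
  · subst hb
    simp at h
    exact ⟨by exact_mod_cast h, rfl⟩
  · exfalso
    have h2 : Real.sqrt 2 = ((-a / b : ℚ) : ℝ) := by
      push_cast
      field_simp
      linarith
    exact irrational_sqrt_two.ne_rat _ h2

private lemma cos_pi_mul_irr {x : ℝ} (hx : Irrational x) : Real.cos (x * Real.pi) ≠ 0 := by
  intro h
  rcases Real.cos_eq_zero_iff.mp h with ⟨k, hk⟩
  have h1 : x * Real.pi = ((2 * k + 1 : ℚ) / 2 : ℚ) * Real.pi := by
    push_cast
    linarith
  have h2 : x = ((2 * k + 1 : ℚ) / 2 : ℚ) := mul_right_cancel₀ Real.pi_ne_zero h1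
  exact hx.ne_rat _ h2

/-- classification of zeros of `sin t + sin (√2 t)` -/
private lemma gzero {x : ℝ} (h : Real.sin x + Real.sin (Real.sqrt 2 * x) = 0) :
    ∃ k : ℤ, x = 2 * k * (Real.sqrt 2 - 1) * Real.pi ∨
      x = (2 * k + 1) * (Real.sqrt 2 + 1) * Real.pi := by
  set u := Real.sqrt 2 with hu
  have hu2 : u * u = 2 := Real.mul_self_sqrt (by norm_num)
  have key : ∀ p q : ℝ, Real.sin (p + q) + Real.sin (p - q) = 2 * Real.sin p * Real.cos q := by
    intro p q; rw [Real.sin_add, Real.sin_sub]; ring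
  have hprod : 2 * Real.sin ((x + u * x) / 2) * Real.cos ((x - u * x) / 2) = 0 := by
    have := key ((x + u * x) / 2) ((x - u * x) / 2)
    rw [show (x + u * x) / 2 + (x - u * x) / 2 = x by ring,
      show (x + u * x) / 2 - (x - u * x) / 2 = u * x by ring] at this
    linarith
  rcases mul_eq_zero.mp hprod with h1 | h1
  · have h1' : Real.sin ((x + u * x) / 2) = 0 := by
      rcases mul_eq_zero.mp h1 with h2 | h2
      · norm_num at h2
      · exact h2
    rcases Real.sin_eq_zero_iff.mp h1' with ⟨n, hn⟩
    refine ⟨n, Or.inl ?_⟩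
    linear_combination (2 * (1 - u)) * hn - x * hu2
  · rcases Real.cos_eq_zero_iff.mp h1 with ⟨n, hn⟩
    refine ⟨-n - 1, Or.inr ?_⟩
    push_cast
    linear_combination (-2 * (1 + u)) * hn - x * hu2

private lemma sign_change_pos (g : ℝ → ℝ) (z d τ : ℝ) (hg : Continuous g) (hz : g z = 0)
    (hd : HasDerivAt g d z) (hdpos : 0 < d) (hc : g (z + τ) ≠ 0) :
    ∃ t, g (t + τ) * g t < 0 := by
  set c := g (z + τ) with hcdef
  have hcont : ∀ᶠ x in nhds (z + τ), |g x - c| < |c| :=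
    (hg.tendsto (z + τ)).eventually (eventually_abs_sub_lt c (abs_pos.mpr hc))
  rcases Metric.eventually_nhds_iff.mp hcont with ⟨δ, hδpos, hδ⟩
  have hslope := hasDerivAt_iff_tendsto_slope.mp hd
  have hev : ∀ᶠ t in nhdsWithin z {z}ᶜ, 0 < slope g z t :=
    hslope.eventually (eventually_gt_nhds hdpos)
  have hclose : ∀ᶠ t in nhds z, |t - z| < δ := eventually_abs_sub_lt z hδpos
  rcases lt_or_gt_of_ne hc with hcneg | hcpos
  · -- c < 0 : pick t > z, g t > 0, g (t+τ) < 0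
    have h1 : ∀ᶠ t in nhdsWithin z (Ioi z), 0 < slope g z t :=
      hev.filter_mono (nhdsWithin_mono z (fun t ht => ne_of_gt ht))
    have h2 : ∀ᶠ t in nhdsWithin z (Ioi z), |t - z| < δ :=
      eventually_nhdsWithin_of_eventually_nhds hclose
    have h3 : ∀ᶠ t in nhdsWithin z (Ioi z), z < t := eventually_mem_nhdsWithin
    have := (nhdsGT_neBot z)
    rcases ((h1.and h2).and h3).exists with ⟨t, ⟨hs, hdist⟩, hzt⟩
    refine ⟨t, ?_⟩
    have hne : t - z ≠ 0 := sub_ne_zero.mpr (ne_of_gt hzt)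
    have hgt : 0 < g t := by
      have h5 : g t - g z = slope g z t * (t - z) := by
        rw [slope_def_field]; exact (div_mul_cancel₀ _ hne).symm
      have h6 : 0 < slope g z t * (t - z) := mul_pos hs (by linarith)
      rw [← h5, hz] at h6; linarith
    have hnear : |g (t + τ) - c| < |c| := hδ (by
      rw [Real.dist_eq, show t + τ - (z + τ) = t - z by ring]; exact hdist)
    have hgτ : g (t + τ) < 0 := by
      rw [abs_of_neg hcneg] at hnear
      rcases abs_lt.mp hnear with ⟨hl, hr⟩
      linarith
    exact mul_neg_of_neg_of_pos hgτ hgt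
  · -- c > 0 : pick t < z, g t < 0, g (t+τ) > 0
    have h1 : ∀ᶠ t in nhdsWithin z (Iio z), 0 < slope g z t :=
      hev.filter_mono (nhdsWithin_mono z (fun t ht => ne_of_lt ht))
    have h2 : ∀ᶠ t in nhdsWithin z (Iio z), |t - z| < δ :=
      eventually_nhdsWithin_of_eventually_nhds hclose
    have h3 : ∀ᶠ t in nhdsWithin z (Iio z), t < z := eventually_mem_nhdsWithin
    have := (nhdsLT_neBot z)
    rcases ((h1.and h2).and h3).exists with ⟨t, ⟨hs, hdist⟩, hzt⟩
    refine ⟨t, ?_⟩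
    have hne : t - z ≠ 0 := sub_ne_zero.mpr (ne_of_lt hzt)
    have hgt : g t < 0 := by
      have h5 : g t - g z = slope g z t * (t - z) := by
        rw [slope_def_field]; exact (div_mul_cancel₀ _ hne).symm
      have h6 : slope g z t * (t - z) < 0 := mul_neg_of_pos_of_neg hs (by linarith)
      rw [← h5, hz] at h6; linarith
    have hnear : |g (t + τ) - c| < |c| := hδ (by
      rw [Real.dist_eq, show t + τ - (z + τ) = t - z by ring]; exact hdist)
    have hgτ : 0 < g (t + τ) := by
      rw [abs_of_pos hcpos] at hnear
      rcases abs_lt.mp hnear with ⟨hl, hr⟩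
      linarith
    exact mul_neg_of_pos_of_neg hgτ hgt

private lemma sign_change (g : ℝ → ℝ) (z d τ : ℝ) (hg : Continuous g) (hz : g z = 0)
    (hd : HasDerivAt g d z) (hdne : d ≠ 0) (hc : g (z + τ) ≠ 0) :
    ∃ t, g (t + τ) * g t < 0 := by
  rcases lt_or_gt_of_ne hdne with hneg | hpos
  · rcases sign_change_pos (fun t => -g t) z (-d) τ hg.neg (by simp [hz]) hd.neg
      (by linarith) (by simpa using hc) with ⟨t, ht⟩
    exact ⟨t, by simpa using ht⟩
  · exact sign_change_pos g z d τ hg hz hd hpos hc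

theorem stmt16 (τ : ℝ) (hτ : τ ≠ 0) :
    ∃ t : ℝ, (Real.sin (t + τ) + Real.sin (Real.sqrt 2 * (t + τ))) *
      (Real.sin t + Real.sin (Real.sqrt 2 * t)) < 0 := by
  have hu2 : Real.sqrt 2 * Real.sqrt 2 = 2 := Real.mul_self_sqrt (by norm_num)
  have hu1 : 1 < Real.sqrt 2 := by nlinarith [Real.sqrt_nonneg 2]
  have hune : Real.sqrt 2 - 1 ≠ 0 := sub_ne_zero.mpr (ne_of_gt hu1)
  set g : ℝ → ℝ := fun t => Real.sin t + Real.sin (Real.sqrt 2 * t) with hg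
  have hgcont : Continuous g := by fun_prop
  have hderiv : ∀ z : ℝ, HasDerivAt g
      (Real.cos z + Real.cos (Real.sqrt 2 * z) * Real.sqrt 2) z := by
    intro z
    have hlin : HasDerivAt (fun t : ℝ => Real.sqrt 2 * t) (Real.sqrt 2) z := by
      simpa using (hasDerivAt_id z).const_mul (Real.sqrt 2)
    exact (Real.hasDerivAt_sin z).add ((Real.hasDerivAt_sin (Real.sqrt 2 * z)).comp z hlin)
  by_cases h0 : Real.sin τ + Real.sin (Real.sqrt 2 * τ) = 0
  · by_cases h1 : Real.sin ((Real.sqrt 2 + 1) * Real.pi + τ) +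
        Real.sin (Real.sqrt 2 * ((Real.sqrt 2 + 1) * Real.pi + τ)) = 0
    · -- both zero: τ = -(√2+1)π, use z = 3(√2+1)π
      have hτval : τ = -((Real.sqrt 2 + 1) * Real.pi) := by
        obtain ⟨k, hk⟩ := gzero h0
        obtain ⟨k', hk'⟩ := gzero h1
        rcases hk with hA | hB <;> rcases hk' with hA' | hB'
        · exfalso
          have heq : (((1 + 2*k' - 2*k : ℤ) : ℝ) +
              ((1 + 2*k - 2*k' : ℤ) : ℝ) * Real.sqrt 2) * Real.pi = 0 * Real.pi := by
            push_cast; linear_combination hA' - hA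
          have := irr_lin _ _ (mul_right_cancel₀ Real.pi_ne_zero heq)
          omega
        · exfalso
          have heq : (((-2*k - 2*k' : ℤ) : ℝ) +
              ((2*k - 2*k' : ℤ) : ℝ) * Real.sqrt 2) * Real.pi = 0 * Real.pi := by
            push_cast; linear_combination hB' - hA
          have hkk := irr_lin _ _ (mul_right_cancel₀ Real.pi_ne_zero heq)
          have hk0 : k = 0 := by omega
          rw [hk0] at hA; norm_num at hA
          exact hτ hA
        · have heq : (((2*k + 2 + 2*k' : ℤ) : ℝ) +
              ((2*k + 2 - 2*k' : ℤ) : ℝ) * Real.sqrt 2) * Real.pi = 0 * Real.pi := by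
            push_cast; linear_combination hA' - hB
          have hkk := irr_lin _ _ (mul_right_cancel₀ Real.pi_ne_zero heq)
          have hkm : k = -1 := by omega
          rw [hkm] at hB; push_cast at hB; rw [hB]; ring
        · exfalso
          have heq : (((1 + 2*k - 2*k' : ℤ) : ℝ) +
              ((1 + 2*k - 2*k' : ℤ) : ℝ) * Real.sqrt 2) * Real.pi = 0 * Real.pi := by
            push_cast; linear_combination hB' - hB
          have := irr_lin _ _ (mul_right_cancel₀ Real.pi_ne_zero heq)
          omega
      -- trig values at z = 3(√2+1)π
      have esin1 : Real.sin (3 * (Real.sqrt 2 + 1) * Real.pi)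
          = -Real.sin (3 * Real.sqrt 2 * Real.pi) := by
        rw [show 3 * (Real.sqrt 2 + 1) * Real.pi
            = (3 * Real.sqrt 2 * Real.pi + Real.pi) + 2 * Real.pi by ring,
          Real.sin_add_two_pi, Real.sin_add_pi]
      have esin2 : Real.sin (Real.sqrt 2 * (3 * (Real.sqrt 2 + 1) * Real.pi))
          = Real.sin (3 * Real.sqrt 2 * Real.pi) := by
        rw [show Real.sqrt 2 * (3 * (Real.sqrt 2 + 1) * Real.pi)
            = ((3 * Real.sqrt 2 * Real.pi + 2 * Real.pi) + 2 * Real.pi) + 2 * Real.pi by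
              linear_combination 3 * Real.pi * hu2,
          Real.sin_add_two_pi, Real.sin_add_two_pi, Real.sin_add_two_pi]
      have ecos1 : Real.cos (3 * (Real.sqrt 2 + 1) * Real.pi)
          = -Real.cos (3 * Real.sqrt 2 * Real.pi) := by
        rw [show 3 * (Real.sqrt 2 + 1) * Real.pi
            = (3 * Real.sqrt 2 * Real.pi + Real.pi) + 2 * Real.pi by ring,
          Real.cos_add_two_pi, Real.cos_add_pi]
      have ecos2 : Real.cos (Real.sqrt 2 * (3 * (Real.sqrt 2 + 1) * Real.pi))
          = Real.cos (3 * Real.sqrt 2 * Real.pi) := by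
        rw [show Real.sqrt 2 * (3 * (Real.sqrt 2 + 1) * Real.pi)
            = ((3 * Real.sqrt 2 * Real.pi + 2 * Real.pi) + 2 * Real.pi) + 2 * Real.pi by
              linear_combination 3 * Real.pi * hu2,
          Real.cos_add_two_pi, Real.cos_add_two_pi, Real.cos_add_two_pi]
      have hz : g (3 * (Real.sqrt 2 + 1) * Real.pi) = 0 := by
        show Real.sin _ + Real.sin _ = 0
        rw [esin1, esin2]; ring
      have hd : HasDerivAt g ((Real.sqrt 2 - 1) * Real.cos (3 * Real.sqrt 2 * Real.pi))
          (3 * (Real.sqrt 2 + 1) * Real.pi) := by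
        have h := hderiv (3 * (Real.sqrt 2 + 1) * Real.pi)
        rw [ecos1, ecos2] at h
        convert h using 1; ring
      have hirr3 : Irrational (3 * Real.sqrt 2) := by
        have := irrational_sqrt_two.intCast_mul (show (3:ℤ) ≠ 0 by norm_num)
        push_cast at this; exact this
      have hdne : (Real.sqrt 2 - 1) * Real.cos (3 * Real.sqrt 2 * Real.pi) ≠ 0 :=
        mul_ne_zero hune (cos_pi_mul_irr hirr3)
      have hc : g (3 * (Real.sqrt 2 + 1) * Real.pi + τ) ≠ 0 := by
        show Real.sin _ + Real.sin _ ≠ 0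
        intro h
        rw [show 3 * (Real.sqrt 2 + 1) * Real.pi + τ = 2 * (Real.sqrt 2 + 1) * Real.pi by
          rw [hτval]; ring] at h
        obtain ⟨m, hm⟩ := gzero h
        rcases hm with hA | hB
        · have heq : (((2 + 2*m : ℤ) : ℝ) +
              ((2 - 2*m : ℤ) : ℝ) * Real.sqrt 2) * Real.pi = 0 * Real.pi := by
            push_cast; linear_combination hA
          have := irr_lin _ _ (mul_right_cancel₀ Real.pi_ne_zero heq)
          omega
        · have heq : (((1 - 2*m : ℤ) : ℝ) +
              ((1 - 2*m : ℤ) : ℝ) * Real.sqrt 2) * Real.pi = 0 * Real.pi := by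
            push_cast; linear_combination hB
          have := irr_lin _ _ (mul_right_cancel₀ Real.pi_ne_zero heq)
          omega
      exact sign_change g (3 * (Real.sqrt 2 + 1) * Real.pi) _ τ hgcont hz hd hdne hc
    · -- g((√2+1)π + τ) ≠ 0: use z = (√2+1)π
      have esin1 : Real.sin ((Real.sqrt 2 + 1) * Real.pi)
          = -Real.sin (Real.sqrt 2 * Real.pi) := by
        rw [show (Real.sqrt 2 + 1) * Real.pi
            = Real.sqrt 2 * Real.pi + Real.pi by ring, Real.sin_add_pi]
      have esin2 : Real.sin (Real.sqrt 2 * ((Real.sqrt 2 + 1) * Real.pi))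
          = Real.sin (Real.sqrt 2 * Real.pi) := by
        rw [show Real.sqrt 2 * ((Real.sqrt 2 + 1) * Real.pi)
            = Real.sqrt 2 * Real.pi + 2 * Real.pi by linear_combination Real.pi * hu2,
          Real.sin_add_two_pi]
      have ecos1 : Real.cos ((Real.sqrt 2 + 1) * Real.pi)
          = -Real.cos (Real.sqrt 2 * Real.pi) := by
        rw [show (Real.sqrt 2 + 1) * Real.pi
            = Real.sqrt 2 * Real.pi + Real.pi by ring, Real.cos_add_pi]
      have ecos2 : Real.cos (Real.sqrt 2 * ((Real.sqrt 2 + 1) * Real.pi))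
          = Real.cos (Real.sqrt 2 * Real.pi) := by
        rw [show Real.sqrt 2 * ((Real.sqrt 2 + 1) * Real.pi)
            = Real.sqrt 2 * Real.pi + 2 * Real.pi by linear_combination Real.pi * hu2,
          Real.cos_add_two_pi]
      have hz : g ((Real.sqrt 2 + 1) * Real.pi) = 0 := by
        show Real.sin _ + Real.sin _ = 0
        rw [esin1, esin2]; ring
      have hd : HasDerivAt g ((Real.sqrt 2 - 1) * Real.cos (Real.sqrt 2 * Real.pi))
          ((Real.sqrt 2 + 1) * Real.pi) := by
        have h := hderiv ((Real.sqrt 2 + 1) * Real.pi)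
        rw [ecos1, ecos2] at h
        convert h using 1; ring
      have hdne : (Real.sqrt 2 - 1) * Real.cos (Real.sqrt 2 * Real.pi) ≠ 0 :=
        mul_ne_zero hune (cos_pi_mul_irr irrational_sqrt_two)
      exact sign_change g ((Real.sqrt 2 + 1) * Real.pi) _ τ hgcont hz hd hdne h1
  · -- g(τ) ≠ 0: use z = 0
    have hz : g 0 = 0 := by
      show Real.sin 0 + Real.sin (Real.sqrt 2 * 0) = 0
      simp
    have hd : HasDerivAt g (1 + Real.sqrt 2) 0 := by
      have h := hderiv 0
      norm_num at h
      convert h using 1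
    have hdne : (1 : ℝ) + Real.sqrt 2 ≠ 0 := by positivity
    have hc : g (0 + τ) ≠ 0 := by
      show Real.sin (0 + τ) + Real.sin (Real.sqrt 2 * (0 + τ)) ≠ 0
      rw [zero_add]; exact h0
    exact sign_change g 0 (1 + Real.sqrt 2) τ hgcont hz hd hdne hc
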